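/- Let T : (ℝ₊*)ⁿ → ℝⁿ satisfy T(ȳ) − T(y) = M(ȳ,y)(ȳ − y) with M(ȳ,y) nonnegative and irreducible for all y, ȳ. If y and ȳ are fixed points of T with y ≤ ȳ and y ≠ ȳ, then in fact y < ȳ strictly in every component and ρ(M(ȳ,y)) = 1. -/

import Mathlib

noncomputable def specRad {n : ℕ} (A : Matrix (Fin n) (Fin n) ℝ) : ℝ :=
  sSup ((fun mu : ℂ => ‖mu‖) '' spectrum ℂ (A.map (Complex.ofReal)))

/-- A matrix is reducible if some simultaneous permutation of rows and columns
puts it in block upper triangular form with a nontrivial zero lower-left block. -/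
def MatReducible {n : ℕ} (B : Matrix (Fin n) (Fin n) ℝ) : Prop :=
  ∃ σ : Equiv.Perm (Fin n), ∃ r : ℕ, 1 ≤ r ∧ r ≤ n - 1 ∧
    ∀ i j : Fin n, r ≤ (i : ℕ) → (j : ℕ) < r → B (σ i) (σ j) = 0

def MatIrreducible {n : ℕ} (B : Matrix (Fin n) (Fin n) ℝ) : Prop :=
  ¬ MatReducible B

open Classical in
/-- positivity of a nonnegative eigenvector of an irreducible nonnegative matrix -/
lemma aux_pos {n : ℕ} (A : Matrix (Fin n) (Fin n) ℝ)
    (hAnn : ∀ i j, 0 ≤ A i j) (hAirr : MatIrreducible A)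
    (v : Fin n → ℝ) (hv0 : ∀ i, 0 ≤ v i) (hvne : v ≠ 0)
    (heig : A.mulVec v = v) : ∀ i, 0 < v i := by
  by_contra hcon
  push_neg at hcon
  obtain ⟨i0, hi0⟩ := hcon
  have hvi0 : v i0 = 0 := le_antisymm hi0 (hv0 i0)
  obtain ⟨k, hk⟩ : ∃ k, v k ≠ 0 := by
    by_contra h; push_neg at h; exact hvne (funext h)
  -- zero block property
  have hblock : ∀ a b : Fin n, v a = 0 → v b ≠ 0 → A a b = 0 := by
    intro a b ha hb
    have hsum : ∑ j, A a j * v j = 0 := by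
      have := congrFun heig a
      simpa [Matrix.mulVec, dotProduct, ha] using this
    have hterm := (Finset.sum_eq_zero_iff_of_nonneg
      (fun j _ => mul_nonneg (hAnn a j) (hv0 j))).mp hsum b (Finset.mem_univ b)
    exact (mul_eq_zero.mp hterm).resolve_right hb
  -- build the permutation
  set p : Fin n → Prop := fun i => v i ≠ 0 with hp
  set r : ℕ := Fintype.card {x // p x} with hr
  have hrle : r ≤ n := by simpa using Fintype.card_subtype_le p
  have hcompl : Fintype.card {x // ¬ p x} = n - r := by
    have h := Fintype.card_subtype_compl p; rw [Fintype.card_fin] at h; omega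
  have hr1 : 1 ≤ r := by
    have : Nonempty {x // p x} := ⟨⟨k, hk⟩⟩
    exact Fintype.card_pos
  have hc1 : 1 ≤ n - r := by
    have : Nonempty {x // ¬ p x} := ⟨⟨i0, by simp [hp, hvi0]⟩⟩
    have := Fintype.card_pos (α := {x // ¬ p x})
    omega
  have hn : n = r + (n - r) := by omega
  let e1 : Fin r ≃ {x // p x} := (Fintype.equivFin _).symm
  let e2 : Fin (n - r) ≃ {x // ¬ p x} :=
    (finCongr hcompl.symm).trans (Fintype.equivFin _).symm
  let σ : Equiv.Perm (Fin n) :=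
    ((finCongr hn).trans finSumFinEquiv.symm).trans
      ((Equiv.sumCongr e1 e2).trans (Equiv.sumCompl p))
  apply hAirr
  refine ⟨σ, r, hr1, by omega, ?_⟩
  intro i j hi hj
  have hσj : p (σ j) := by
    have hcast : (finCongr hn) j = Fin.castAdd (n - r) ⟨j, hj⟩ := by
      apply Fin.ext; simp
    have : σ j = (e1 ⟨j, hj⟩ : Fin n) := by
      simp only [σ, Equiv.trans_apply, hcast, finSumFinEquiv_symm_apply_castAdd,
        Equiv.sumCongr_apply, Sum.map_inl, Equiv.sumCompl_apply_inl]
    rw [this]; exact (e1 ⟨j, hj⟩).2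
  have hσi : ¬ p (σ i) := by
    have hilt : (i : ℕ) - r < n - r := by omega
    have hcast : (finCongr hn) i = Fin.natAdd r ⟨(i : ℕ) - r, hilt⟩ := by
      apply Fin.ext; simp; omega
    have : σ i = (e2 ⟨(i : ℕ) - r, hilt⟩ : Fin n) := by
      simp only [σ, Equiv.trans_apply, hcast, finSumFinEquiv_symm_apply_natAdd,
        Equiv.sumCongr_apply, Sum.map_inr, Equiv.sumCompl_apply_inr]
    rw [this]; exact (e2 ⟨(i : ℕ) - r, hilt⟩).2
  exact hblock _ _ (by simpa [hp] using hσi) hσj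

lemma aux_mulVec_sub {n : ℕ} (B : Matrix (Fin n) (Fin n) ℂ) (μ : ℂ) (w : Fin n → ℂ) :
    ((algebraMap ℂ (Matrix (Fin n) (Fin n) ℂ)) μ - B).mulVec w = μ • w - B.mulVec w := by
  rw [Matrix.sub_mulVec, Algebra.algebraMap_eq_smul_one, Matrix.smul_mulVec,
    Matrix.one_mulVec]

lemma aux_one_mem {n : ℕ} (A : Matrix (Fin n) (Fin n) ℝ) (v : Fin n → ℝ)
    (hvne : v ≠ 0) (heig : A.mulVec v = v) :
    (1 : ℂ) ∈ spectrum ℂ (A.map Complex.ofReal) := by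
  rw [spectrum.mem_iff]
  rw [Matrix.isUnit_iff_isUnit_det, isUnit_iff_ne_zero, not_not]
  rw [← Matrix.exists_mulVec_eq_zero_iff]
  refine ⟨fun i => (v i : ℂ), ?_, ?_⟩
  · intro h
    apply hvne
    funext i
    have := congrFun h i
    simpa using this
  · rw [aux_mulVec_sub, sub_eq_zero]
    funext i
    have hre := congrFun heig i
    simp only [Pi.smul_apply, one_smul, Matrix.mulVec, dotProduct,
      Matrix.map_apply]
    rw [← hre]
    push_cast [Matrix.mulVec, dotProduct]
    ring

lemma aux_bound {n : ℕ} (A : Matrix (Fin n) (Fin n) ℝ)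
    (hAnn : ∀ i j, 0 ≤ A i j) (v : Fin n → ℝ) (hv : ∀ i, 0 < v i)
    (heig : A.mulVec v = v) :
    ∀ μ ∈ spectrum ℂ (A.map Complex.ofReal), ‖μ‖ ≤ 1 := by
  intro μ hμ
  rw [spectrum.mem_iff, Matrix.isUnit_iff_isUnit_det, isUnit_iff_ne_zero, not_not,
    ← Matrix.exists_mulVec_eq_zero_iff] at hμ
  obtain ⟨w, hwne, hw⟩ := hμ
  -- eigen equation: (A.map ofReal).mulVec w = μ • w
  rw [aux_mulVec_sub, sub_eq_zero] at hw
  have heq : ∀ i, μ * w i = ∑ j, (A i j : ℂ) * w j := by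
    intro i
    have := congrFun hw i
    simpa [Matrix.mulVec, dotProduct, Matrix.map_apply] using this
  obtain ⟨k, hk⟩ : ∃ k, w k ≠ 0 := by
    by_contra h; push_neg at h; exact hwne (funext h)
  have hne : (Finset.univ : Finset (Fin n)).Nonempty := ⟨k, Finset.mem_univ k⟩
  obtain ⟨i0, -, hmax⟩ := Finset.exists_max_image Finset.univ
    (fun i => ‖w i‖ / v i) hne
  set c : ℝ := ‖w i0‖ / v i0 with hc
  have hcpos : 0 < c := by
    have h1 : ‖w k‖ / v k ≤ c := hmax k (Finset.mem_univ k)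
    have h2 : 0 < ‖w k‖ / v k :=
      div_pos (by simpa using hk) (hv k)
    linarith
  have hwle : ∀ j, ‖w j‖ ≤ c * v j := by
    intro j
    have := hmax j (Finset.mem_univ j)
    rw [div_le_iff₀ (hv j)] at this
    linarith [this]
  have key : ‖μ‖ * (c * v i0) ≤ c * v i0 := by
    have h1 : ‖μ * w i0‖ ≤ ∑ j, A i0 j * ‖w j‖ := by
      rw [heq i0]
      calc ‖∑ j, (A i0 j : ℂ) * w j‖
          ≤ ∑ j, ‖(A i0 j : ℂ) * w j‖ := by
            exact norm_sum_le _ _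
        _ = ∑ j, A i0 j * ‖w j‖ := by
            refine Finset.sum_congr rfl fun j _ => ?_
            rw [norm_mul, Complex.norm_real, Real.norm_eq_abs, abs_of_nonneg (hAnn i0 j)]
    have h2 : ∑ j, A i0 j * ‖w j‖ ≤ c * v i0 := by
      calc ∑ j, A i0 j * ‖w j‖
          ≤ ∑ j, A i0 j * (c * v j) := by
            refine Finset.sum_le_sum fun j _ => ?_
            exact mul_le_mul_of_nonneg_left (hwle j) (hAnn i0 j)
        _ = c * ∑ j, A i0 j * v j := by
            rw [Finset.mul_sum]; exact Finset.sum_congr rfl fun j _ => by ring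
        _ = c * v i0 := by
            congr 1
            have := congrFun heig i0
            simpa [Matrix.mulVec, dotProduct] using this
    have hwi0 : ‖w i0‖ = c * v i0 := by
      rw [hc, div_mul_cancel₀ _ (ne_of_gt (hv i0))]
    calc ‖μ‖ * (c * v i0) = ‖μ * w i0‖ := by
          rw [norm_mul, hwi0]
      _ ≤ ∑ j, A i0 j * ‖w j‖ := h1
      _ ≤ c * v i0 := h2
  have hpos : 0 < c * v i0 := mul_pos hcpos (hv i0)
  exact le_of_mul_le_mul_right (by linarith [key]) hpos

theorem stmt11 {n : ℕ} (T : (Fin n → ℝ) → (Fin n → ℝ))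
    (M : (Fin n → ℝ) → (Fin n → ℝ) → Matrix (Fin n) (Fin n) ℝ)
    (hM : ∀ y z : Fin n → ℝ, (∀ i, 0 < y i) → (∀ i, 0 < z i) →
      T z - T y = (M z y).mulVec (z - y))
    (hMnn : ∀ y z : Fin n → ℝ, (∀ i, 0 < y i) → (∀ i, 0 < z i) →
      ∀ i j, 0 ≤ M z y i j)
    (hMirr : ∀ y z : Fin n → ℝ, (∀ i, 0 < y i) → (∀ i, 0 < z i) →
      MatIrreducible (M z y))
    (y z : Fin n → ℝ) (hy : ∀ i, 0 < y i) (hz : ∀ i, 0 < z i)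
    (hfy : T y = y) (hfz : T z = z) (hle : y ≤ z) (hne : y ≠ z) :
    (∀ i, y i < z i) ∧ specRad (M z y) = 1 := by
  set A := M z y with hA
  set v : Fin n → ℝ := z - y with hv
  have heig : A.mulVec v = v := by
    have := hM y z hy hz
    rw [hfy, hfz] at this
    exact this.symm
  have hvnn : ∀ i, 0 ≤ v i := fun i => sub_nonneg.mpr (hle i)
  have hvne : v ≠ 0 := by
    intro h
    apply hne
    funext i
    have := congrFun h i
    simp [hv] at this
    linarith [this]
  have hpos := aux_pos A (hMnn y z hy hz) (hMirr y z hy hz) v hvnn hvne heig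
  constructor
  · intro i
    have := hpos i
    simp [hv] at this
    linarith
  · have hbd := aux_bound A (hMnn y z hy hz) v hpos heig
    have hmem : (1 : ℝ) ∈ (fun mu : ℂ => ‖mu‖) ''
        spectrum ℂ (A.map Complex.ofReal) :=
      ⟨1, aux_one_mem A v hvne heig, by simp⟩
    have hub : ∀ x ∈ (fun mu : ℂ => ‖mu‖) ''
        spectrum ℂ (A.map Complex.ofReal), x ≤ 1 := by
      rintro x ⟨μ, hμ, rfl⟩
      exact hbd μ hμ
    unfold specRad
    exact le_antisymm (csSup_le ⟨1, hmem⟩ hub) (le_csSup ⟨1, hub⟩ hmem)
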